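/- Let s_n denote the number of independent dominating sets of the ortho-chain square cactus S_n for n ≥ 1, and set s_0 = 1 (the one-vertex graph S_0 has exactly one maximal independent set). Then, in the ring of formal power series over ℚ, (1 - 2X) · (∑_{n≥0} s_n Xⁿ) = 1. -/

import Mathlib

/-- `S` is an independent dominating set of `G`: pairwise non-adjacent, and every
vertex outside `S` has a neighbour in `S`. -/
def IsIndepDomSet {V : Type*} (G : SimpleGraph V) (S : Finset V) : Prop :=
  (∀ v ∈ S, ∀ w ∈ S, ¬ G.Adj v w) ∧ ∀ v, v ∉ S → ∃ w ∈ S, G.Adj v w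

/-- The ortho-chain square cactus `S n`: `Sum.inl i` is the cut vertex `x i`
(`0 ≤ i ≤ n`), `Sum.inr (Sum.inl k)` is `y (k+1)` and `Sum.inr (Sum.inr k)` is
`z (k+1)` (`0 ≤ k ≤ n-1`); the `i`-th square (`1 ≤ i ≤ n`) is the four-cycle
`x (i-1) – x i – y i – z i – x (i-1)`. -/
def orthoSq (n : ℕ) : SimpleGraph (Fin (n + 1) ⊕ (Fin n ⊕ Fin n)) :=
  SimpleGraph.fromRel fun p q =>
    match p, q with
    | Sum.inl i, Sum.inl j => (i : ℕ) + 1 = (j : ℕ)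
    | Sum.inl i, Sum.inr (Sum.inl k) => (i : ℕ) = (k : ℕ) + 1
    | Sum.inl i, Sum.inr (Sum.inr k) => (i : ℕ) = (k : ℕ)
    | Sum.inr (Sum.inl k), Sum.inr (Sum.inr k') => k = k'
    | _, _ => False

/-- The number of independent dominating sets of the ortho-chain square cactus `S n`. -/
noncomputable def numIDSOrthoSq (n : ℕ) : ℕ :=
  Nat.card {S : Finset (Fin (n + 1) ⊕ (Fin n ⊕ Fin n)) // IsIndepDomSet (orthoSq n) S}

/-! Auxiliary development -/

def bget (n : ℕ) (b : Fin n → Bool) (j : ℕ) : Bool :=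
  if h : j < n then b ⟨j, h⟩ else false

lemma bget_lt {n : ℕ} {b : Fin n → Bool} {j : ℕ} (h : j < n) : bget n b j = b ⟨j, h⟩ :=
  dif_pos h

def xMem (n : ℕ) (b : Fin n → Bool) (i : ℕ) : Bool :=
  if i = 0 then (decide (n = 0) || bget n b 0)
  else (!(bget n b (i - 1)) && (decide (i = n) || bget n b i))

def misMem (n : ℕ) (b : Fin n → Bool) : (Fin (n + 1) ⊕ (Fin n ⊕ Fin n)) → Bool
  | Sum.inl i => xMem n b (i : ℕ)
  | Sum.inr (Sum.inl k) => bget n b (k : ℕ)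
  | Sum.inr (Sum.inr k) => !(bget n b (k : ℕ))

def misSet (n : ℕ) (b : Fin n → Bool) : Finset (Fin (n + 1) ⊕ (Fin n ⊕ Fin n)) :=
  Finset.univ.filter (fun v => misMem n b v = true)

lemma mem_misSet (n : ℕ) (b : Fin n → Bool) (v) :
    v ∈ misSet n b ↔ misMem n b v = true := by simp [misSet]

-- adjacency characterizations
lemma adj_xx (n : ℕ) (i j : Fin (n+1)) :
    (orthoSq n).Adj (Sum.inl i) (Sum.inl j) ↔ ((i:ℕ)+1 = j ∨ (j:ℕ)+1 = i) := by
  simp only [orthoSq, SimpleGraph.fromRel_adj, ne_eq]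
  constructor
  · rintro ⟨-, h⟩; exact h
  · intro h
    refine ⟨fun he => ?_, h⟩
    obtain rfl : i = j := Sum.inl.inj he
    rcases h with h | h <;> omega

lemma adj_xy (n : ℕ) (i : Fin (n+1)) (k : Fin n) :
    (orthoSq n).Adj (Sum.inl i) (Sum.inr (Sum.inl k)) ↔ ((i:ℕ) = (k:ℕ) + 1) := by
  simp [orthoSq, SimpleGraph.fromRel_adj]

lemma adj_xz (n : ℕ) (i : Fin (n+1)) (k : Fin n) :
    (orthoSq n).Adj (Sum.inl i) (Sum.inr (Sum.inr k)) ↔ ((i:ℕ) = (k:ℕ)) := by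
  simp [orthoSq, SimpleGraph.fromRel_adj]

lemma adj_yz (n : ℕ) (k k' : Fin n) :
    (orthoSq n).Adj (Sum.inr (Sum.inl k)) (Sum.inr (Sum.inr k')) ↔ k = k' := by
  simp [orthoSq, SimpleGraph.fromRel_adj]

lemma not_adj_yy (n : ℕ) (k k' : Fin n) :
    ¬ (orthoSq n).Adj (Sum.inr (Sum.inl k)) (Sum.inr (Sum.inl k')) := by
  simp [orthoSq, SimpleGraph.fromRel_adj]

lemma not_adj_zz (n : ℕ) (k k' : Fin n) :
    ¬ (orthoSq n).Adj (Sum.inr (Sum.inr k)) (Sum.inr (Sum.inr k')) := by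
  simp [orthoSq, SimpleGraph.fromRel_adj]

-- independence helper lemmas, all at the ℕ level
lemma indep_xx {n : ℕ} {b : Fin n → Bool} {i j : ℕ} (hj : j ≤ n) (hij : i + 1 = j)
    (hv : xMem n b i = true) (hw : xMem n b j = true) : False := by
  have hj0 : j ≠ 0 := by omega
  simp only [xMem, if_neg hj0] at hw
  have e : j - 1 = i := by omega
  rw [e] at hw
  rw [Bool.and_eq_true] at hw
  obtain ⟨hw1, -⟩ := hw
  rw [Bool.not_eq_true'] at hw1
  simp only [xMem] at hv
  by_cases hi0 : i = 0
  · rw [if_pos hi0] at hv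
    have hn : n ≠ 0 := by omega
    subst hi0
    simp [hn, hw1] at hv
  · rw [if_neg hi0] at hv
    rw [Bool.and_eq_true] at hv
    obtain ⟨-, hv2⟩ := hv
    have hin : i ≠ n := by omega
    simp [hin, hw1] at hv2

lemma indep_xy {n : ℕ} {b : Fin n → Bool} {i k : ℕ} (hk : k < n) (hik : i = k + 1)
    (hv : xMem n b i = true) (hw : bget n b k = true) : False := by
  have hi0 : i ≠ 0 := by omega
  simp only [xMem, if_neg hi0] at hv
  have e : i - 1 = k := by omega
  rw [e] at hv
  simp [hw] at hv

lemma indep_xz {n : ℕ} {b : Fin n → Bool} {i k : ℕ} (hk : k < n) (hik : i = k)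
    (hv : xMem n b i = true) (hw : (!(bget n b k)) = true) : False := by
  subst hik
  rw [Bool.not_eq_true'] at hw
  simp only [xMem] at hv
  by_cases hi0 : i = 0
  · subst hi0
    have hn : n ≠ 0 := by omega
    simp [hn, hw] at hv
  · rw [if_neg hi0] at hv
    rw [Bool.and_eq_true] at hv
    obtain ⟨-, hv2⟩ := hv
    have hin : i ≠ n := by omega
    simp [hin, hw] at hv2

lemma misSet_isIDS (n : ℕ) (b : Fin n → Bool) : IsIndepDomSet (orthoSq n) (misSet n b) := by
  constructor
  · -- independence
    intro v hv w hw hadj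
    rw [mem_misSet] at hv hw
    rcases v with i | k | k <;> rcases w with j | k' | k' <;>
      simp only [misMem] at hv hw
    · rw [adj_xx] at hadj
      rcases hadj with h | h
      · exact indep_xx (by omega) h hv hw
      · exact indep_xx (by omega) h hw hv
    · rw [adj_xy] at hadj
      exact indep_xy k'.isLt hadj hv hw
    · rw [adj_xz] at hadj
      exact indep_xz k'.isLt hadj hv hw
    · rw [(orthoSq n).adj_comm, adj_xy] at hadj
      exact indep_xy k.isLt hadj hw hv
    · exact not_adj_yy n k k' hadj
    · rw [adj_yz] at hadj
      subst hadj
      simp [hv] at hw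
    · rw [(orthoSq n).adj_comm, adj_xz] at hadj
      exact indep_xz k.isLt hadj hw hv
    · rw [(orthoSq n).adj_comm, adj_yz] at hadj
      subst hadj
      simp [hw] at hv
    · exact not_adj_zz n k k' hadj
  · -- domination
    intro v hv
    rw [mem_misSet] at hv
    rcases v with i | k | k <;> simp only [misMem] at hv
    · -- x i not in the set
      by_cases hi0 : (i:ℕ) = 0
      · -- then n ≠ 0 and b 0 = false; z_1 dominates
        simp only [xMem, if_pos hi0, Bool.or_eq_true, decide_eq_true_eq, not_or] at hv
        push_neg at hv
        obtain ⟨hn, hb⟩ := hv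
        have hn' : 0 < n := Nat.pos_of_ne_zero hn
        refine ⟨Sum.inr (Sum.inr ⟨0, hn'⟩), ?_, ?_⟩
        · rw [mem_misSet]
          simp only [misMem, Bool.not_eq_true']
          simpa using hb
        · rw [adj_xz]; exact hi0
      · simp only [xMem, if_neg hi0, Bool.and_eq_true, Bool.not_eq_true', Bool.or_eq_true,
          decide_eq_true_eq, not_and_or, not_or] at hv
        have hi1 : (i:ℕ) - 1 < n := by omega
        rcases hv with hv | ⟨hin, hbi⟩
        · -- b (i-1) = true : y_{i-1} dominates x_i
          rw [Bool.not_eq_false] at hv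
          refine ⟨Sum.inr (Sum.inl ⟨(i:ℕ)-1, hi1⟩), ?_, ?_⟩
          · rw [mem_misSet]
            simpa [misMem] using hv
          · rw [adj_xy]; simp; omega
        · -- i < n and b i = false : z_{i+1} dominates x_i
          have hin' : (i:ℕ) < n := by omega
          rw [Bool.not_eq_true] at hbi
          refine ⟨Sum.inr (Sum.inr ⟨(i:ℕ), hin'⟩), ?_, ?_⟩
          · rw [mem_misSet]
            simpa [misMem] using hbi
          · rw [adj_xz]
    · -- y_k not in: bget k = false, so z_k in, dominates
      rw [Bool.not_eq_true] at hv
      refine ⟨Sum.inr (Sum.inr k), ?_, ?_⟩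
      · rw [mem_misSet]
        simpa [misMem] using hv
      · rw [adj_yz]
    · -- z_k not in: bget k = true, so y_k in, dominates
      simp only [Bool.not_eq_true, Bool.not_eq_false] at hv
      refine ⟨Sum.inr (Sum.inl k), ?_, ?_⟩
      · rw [mem_misSet]
        simpa [misMem] using hv
      · rw [(orthoSq n).adj_comm, adj_yz]

section Converse

variable {n : ℕ} {S : Finset (Fin (n + 1) ⊕ (Fin n ⊕ Fin n))}

lemma ids_z_iff (hS : IsIndepDomSet (orthoSq n) S) (k : Fin n) :
    Sum.inr (Sum.inr k) ∈ S ↔ Sum.inr (Sum.inl k) ∉ S := by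
  constructor
  · intro hz hy
    exact hS.1 _ hy _ hz ((adj_yz n k k).mpr rfl)
  · intro hy
    by_contra hz
    -- domination of y_k gives x_{k+1} ∈ S
    obtain ⟨w, hw, hadj⟩ := hS.2 _ hy
    rcases w with i | k' | k'
    · rw [(orthoSq n).adj_comm, adj_xy] at hadj
      -- i = k+1 ∈ S
      obtain ⟨w', hw', hadj'⟩ := hS.2 _ hz
      rcases w' with i' | k'' | k''
      · rw [(orthoSq n).adj_comm, adj_xz] at hadj'
        -- i' = k ∈ S, and i' + 1 = i, adjacent
        exact hS.1 _ hw' _ hw ((adj_xx n i' i).mpr (Or.inl (by omega)))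
      · rw [(orthoSq n).adj_comm, adj_yz] at hadj'
        subst hadj'; exact hy hw'
      · exact not_adj_zz n k k'' hadj'
    · exact not_adj_yy n k k' hadj
    · rw [adj_yz] at hadj
      subst hadj; exact hz hw

lemma ids_x0_n0 (hS : IsIndepDomSet (orthoSq n) S) (hn : n = 0) (i : Fin (n+1)) :
    Sum.inl i ∈ S := by
  subst hn
  by_contra hx
  obtain ⟨w, hw, hadj⟩ := hS.2 _ hx
  rcases w with j | k' | k'
  · rw [adj_xx] at hadj
    omega
  · exact absurd k'.isLt (by omega)
  · exact absurd k'.isLt (by omega)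

lemma ids_x0_iff (hS : IsIndepDomSet (orthoSq n) S) (hn : 0 < n) (i : Fin (n+1))
    (hi : (i:ℕ) = 0) : Sum.inl i ∈ S ↔ Sum.inr (Sum.inl ⟨0, hn⟩) ∈ S := by
  constructor
  · intro hx
    by_contra hy
    have hz := (ids_z_iff hS ⟨0, hn⟩).mpr hy
    exact hS.1 _ hx _ hz ((adj_xz n i ⟨0, hn⟩).mpr (by simp only [Fin.val_mk]; omega))
  · intro hy
    by_contra hx
    obtain ⟨w, hw, hadj⟩ := hS.2 _ hx
    rcases w with j | k' | k'
    · rw [adj_xx] at hadj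
      -- j = 1, x_1 ∈ S adjacent to y_0 ∈ S
      have : (j:ℕ) = 1 := by omega
      exact hS.1 _ hw _ hy ((adj_xy n j ⟨0, hn⟩).mpr (by simp only [Fin.val_mk]; omega))
    · rw [adj_xy] at hadj
      omega
    · rw [adj_xz] at hadj
      have : k' = ⟨0, hn⟩ := by apply Fin.ext; simp only [Fin.val_mk]; omega
      subst this
      exact (ids_z_iff hS _).mp hw hy

lemma ids_xi_mp (hS : IsIndepDomSet (orthoSq n) S) (i : Fin (n+1)) (hi : (i:ℕ) ≠ 0)
    (hx : Sum.inl i ∈ S) :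
    (Sum.inr (Sum.inl ⟨(i:ℕ)-1, by omega⟩) ∉ S) ∧
      ((i:ℕ) = n ∨ ∃ h : (i:ℕ) < n, Sum.inr (Sum.inl ⟨(i:ℕ), h⟩) ∈ S) := by
  constructor
  · intro hy
    exact hS.1 _ hx _ hy ((adj_xy n i _).mpr (by simp; omega))
  · by_cases hin : (i:ℕ) = n
    · exact Or.inl hin
    · have hlt : (i:ℕ) < n := by omega
      refine Or.inr ⟨hlt, ?_⟩
      by_contra hy
      have hz := (ids_z_iff hS ⟨(i:ℕ), hlt⟩).mpr hy
      exact hS.1 _ hx _ hz ((adj_xz n i _).mpr rfl)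

lemma ids_xi_mpr (hS : IsIndepDomSet (orthoSq n) S) (i : Fin (n+1)) (hi : (i:ℕ) ≠ 0)
    (hy1 : Sum.inr (Sum.inl ⟨(i:ℕ)-1, by omega⟩) ∉ S)
    (hy2 : (i:ℕ) = n ∨ ∃ h : (i:ℕ) < n, Sum.inr (Sum.inl ⟨(i:ℕ), h⟩) ∈ S) :
    Sum.inl i ∈ S := by
  have hz1 := (ids_z_iff hS ⟨(i:ℕ)-1, by omega⟩).mpr hy1
  by_contra hx
  obtain ⟨w, hw, hadj⟩ := hS.2 _ hx
  rcases w with j | k' | k'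
  · rw [adj_xx] at hadj
    rcases hadj with h | h
    · -- j = i+1 ∈ S; then i < n and y_i ∈ S; x_{i+1} adj y_i
      have hlt : (i:ℕ) < n := by omega
      obtain ⟨h', hy⟩ := hy2.resolve_left (by omega)
      exact hS.1 _ hw _ hy ((adj_xy n j ⟨(i:ℕ), h'⟩).mpr (by simp; omega))
    · -- j = i-1 ∈ S; adj z_{i-1}
      exact hS.1 _ hw _ hz1 ((adj_xz n j ⟨(i:ℕ)-1, by omega⟩).mpr (by simp; omega))
  · rw [adj_xy] at hadj
    have : k' = ⟨(i:ℕ)-1, by omega⟩ := by apply Fin.ext; simp; omega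
    rw [this] at hw
    exact hy1 hw
  · rw [adj_xz] at hadj
    -- z_i ∈ S; i < n, y_i ∈ S, adjacent
    have hlt : (i:ℕ) < n := by have := k'.isLt; omega
    obtain ⟨h', hy⟩ := hy2.resolve_left (by omega)
    have : k' = ⟨(i:ℕ), h'⟩ := by apply Fin.ext; simp; omega
    rw [this] at hw
    exact absurd hy ((ids_z_iff hS _).mp hw)

end Converse

lemma IDS_eq_misSet {n : ℕ} {S : Finset (Fin (n + 1) ⊕ (Fin n ⊕ Fin n))}
    (hS : IsIndepDomSet (orthoSq n) S) :
    S = misSet n (fun k => decide (Sum.inr (Sum.inl k) ∈ S)) := by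
  set b := fun k : Fin n => decide (Sum.inr (Sum.inl k) ∈ S) with hb
  have hbget : ∀ (j : ℕ) (h : j < n),
      (bget n b j = true ↔ Sum.inr (Sum.inl (⟨j, h⟩ : Fin n)) ∈ S) := by
    intro j h
    rw [bget_lt h, hb]
    simp
  ext v
  rw [mem_misSet]
  rcases v with i | k | k
  · simp only [misMem, xMem]
    by_cases hi0 : (i:ℕ) = 0
    · rw [if_pos hi0]
      rcases Nat.eq_zero_or_pos n with hn | hn
      · simp [hn, ids_x0_n0 hS hn i]
      · rw [ids_x0_iff hS hn i hi0]
        have hn' : n ≠ 0 := by omega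
        simp only [Bool.or_eq_true, decide_eq_true_eq, hn', false_or]
        exact (hbget 0 hn).symm
    · rw [if_neg hi0]
      have h1lt : (i:ℕ) - 1 < n := by omega
      constructor
      · intro hx
        obtain ⟨h1, h2⟩ := ids_xi_mp hS i hi0 hx
        have e1 : bget n b ((i:ℕ)-1) = false := by
          rw [Bool.eq_false_iff]
          intro hc
          exact h1 ((hbget _ h1lt).mp hc)
        rw [e1]
        simp only [Bool.not_false, Bool.true_and, Bool.or_eq_true, decide_eq_true_eq]
        rcases h2 with h | ⟨h, hy⟩
        · exact Or.inl h
        · exact Or.inr ((hbget _ h).mpr hy)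
      · intro hx
        simp only [Bool.and_eq_true, Bool.not_eq_true', Bool.or_eq_true,
          decide_eq_true_eq] at hx
        obtain ⟨h1, h2⟩ := hx
        refine ids_xi_mpr hS i hi0 ?_ ?_
        · rw [← hbget _ h1lt] at *
          simp [h1]
        · rcases h2 with h | h
          · exact Or.inl h
          · have hlt : (i:ℕ) < n := by
              by_contra hge
              have : ¬ (i:ℕ) < n := hge
              rw [bget] at h
              rw [dif_neg this] at h
              exact Bool.false_ne_true h
            exact Or.inr ⟨hlt, (hbget _ hlt).mp h⟩
  · simp only [misMem]
    rw [hbget _ k.isLt, Fin.eta]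
  · simp only [misMem, Bool.not_eq_true']
    rw [ids_z_iff hS k]
    have hk : (bget n b (k:ℕ) = true) ↔ Sum.inr (Sum.inl k) ∈ S := by
      rw [hbget _ k.isLt, Fin.eta]
    rw [← hk, Bool.not_eq_true]

lemma numIDS_eq (n : ℕ) : numIDSOrthoSq n = 2 ^ n := by
  have e : {S : Finset (Fin (n + 1) ⊕ (Fin n ⊕ Fin n)) // IsIndepDomSet (orthoSq n) S}
      ≃ (Fin n → Bool) :=
    { toFun := fun S k => decide (Sum.inr (Sum.inl k) ∈ S.1)
      invFun := fun b => ⟨misSet n b, misSet_isIDS n b⟩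
      left_inv := fun S => Subtype.ext (IDS_eq_misSet S.2).symm
      right_inv := fun b => by
        funext k
        have h : (Sum.inr (Sum.inl k) ∈ misSet n b) ↔ (b k = true) := by
          rw [mem_misSet]
          simp only [misMem]
          rw [bget_lt k.isLt, Fin.eta]
        simp [h] }
  rw [numIDSOrthoSq, Nat.card_congr e]
  simp [Nat.card_eq_fintype_card]

theorem numIDSOrthoSq_generating_function :
    (1 - 2 * PowerSeries.X) *
        PowerSeries.mk (fun n : ℕ => (numIDSOrthoSq n : ℚ)) = 1 := by
  have hC : (2 : PowerSeries ℚ) = PowerSeries.C (R := ℚ) 2 := (map_ofNat (PowerSeries.C (R := ℚ)) 2).symm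
  ext m
  rw [sub_mul, one_mul, map_sub, hC, mul_assoc, PowerSeries.coeff_C_mul]
  cases m with
  | zero =>
      simp [numIDS_eq]
  | succ m =>
      rw [PowerSeries.coeff_succ_X_mul]
      simp [numIDS_eq, PowerSeries.coeff_one, pow_succ]
      ring
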